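/- Let N be a finite set, w : N × N → ℝ≥0, and let T be a tree on N with hub set H inducing a subtree and spokes as leaves. For a fixed origin i ∈ N and each ordered pair of adjacent hubs (k,m) in T, let r_{ikm} = ∑_{j ∈ C_m(k,m)} w_{ij} if the path from i to the component C_m(k,m) (the component of T − {k,m} containing m) enters through k, and 0 otherwise. Then for every hub k ∈ H, flow conservation holds: [O_i if i's hub is k, else 0] + ∑_{m adjacent hub} r_{imk} = ∑_{m adjacent hub} r_{ikm} + ∑_{j allocated to k} w_{ij}, where O_i = ∑_{j ∈ N} w_{ij} and 'j allocated to k' means j = k or j is a spoke adjacent to k. -/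

import Mathlib

open scoped Classical

/-- The flow with origin i traversing arc (k,m) between adjacent hubs when routing along
tree paths: if i is not on m's side of edge {k,m}, all flow to the component of m
crosses from k to m. -/
noncomputable def rflow {N : Type*} [Fintype N] (T : SimpleGraph N) (w : N → N → ℝ)
    (i k m : N) : ℝ :=
  if ¬ (T.deleteEdges {s(k, m)}).Reachable i m then
    ∑ j ∈ Finset.univ.filter (fun j => (T.deleteEdges {s(k, m)}).Reachable j m), w i j
  else 0

namespace FlowAux

open SimpleGraph

variable {N : Type*}

lemma bridge_not_reach {T : SimpleGraph N} (hT : T.IsAcyclic) {k m : N} (h : T.Adj k m) :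
    ¬ (T.deleteEdges {s(k, m)}).Reachable k m := by
  have hb := (SimpleGraph.isAcyclic_iff_forall_adj_isBridge.mp hT) h
  rw [SimpleGraph.isBridge_iff] at hb
  exact hb

lemma reach_or_aux {T : SimpleGraph N} {k m : N} {a b : N} (p : T.Walk a b) :
    (T.deleteEdges {s(k, m)}).Reachable a b ∨
      ((T.deleteEdges {s(k, m)}).Reachable a k ∧ (T.deleteEdges {s(k, m)}).Reachable b m) ∨
      ((T.deleteEdges {s(k, m)}).Reachable a m ∧ (T.deleteEdges {s(k, m)}).Reachable b k) := by
  induction p with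
  | nil => exact Or.inl (Reachable.refl _)
  | @cons a c b h q ih =>
    by_cases he : s(a, c) = s(k, m)
    · rw [Sym2.eq_iff] at he
      rcases he with ⟨rfl, rfl⟩ | ⟨rfl, rfl⟩
      · rcases ih with hr | ⟨h1, h2⟩ | ⟨h1, h2⟩
        · exact Or.inr (Or.inl ⟨Reachable.refl _, hr.symm⟩)
        · exact Or.inl (h1.symm.trans h2.symm)
        · exact Or.inl h2.symm
      · rcases ih with hr | ⟨h1, h2⟩ | ⟨h1, h2⟩
        · exact Or.inr (Or.inr ⟨Reachable.refl _, hr.symm⟩)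
        · exact Or.inl h2.symm
        · exact Or.inl (h1.symm.trans h2.symm)
    · have hadj : (T.deleteEdges {s(k, m)}).Adj a c := by
        rw [SimpleGraph.deleteEdges_adj]
        exact ⟨h, by simpa using he⟩
      rcases ih with hr | ⟨h1, h2⟩ | ⟨h1, h2⟩
      · exact Or.inl (hadj.reachable.trans hr)
      · exact Or.inr (Or.inl ⟨hadj.reachable.trans h1, h2⟩)
      · exact Or.inr (Or.inr ⟨hadj.reachable.trans h1, h2⟩)

lemma reach_or {T : SimpleGraph N} (hc : T.Connected) {k m : N} (j : N) :
    (T.deleteEdges {s(k, m)}).Reachable j k ∨ (T.deleteEdges {s(k, m)}).Reachable j m := by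
  obtain ⟨p⟩ := hc.preconnected j k
  rcases reach_or_aux (k := k) (m := m) p with hr | ⟨h1, _⟩ | ⟨h1, _⟩
  · exact Or.inl hr
  · exact Or.inl h1
  · exact Or.inr h1

lemma not_both {T : SimpleGraph N} (hT : T.IsAcyclic) {k m : N} (h : T.Adj k m) (j : N) :
    ¬ ((T.deleteEdges {s(k, m)}).Reachable j k ∧ (T.deleteEdges {s(k, m)}).Reachable j m) := by
  rintro ⟨h1, h2⟩
  exact bridge_not_reach hT h (h1.symm.trans h2)

lemma not_mem_support {T : SimpleGraph N} (hT : T.IsAcyclic) {k m j : N} (h : T.Adj k m)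
    (p : (T.deleteEdges {s(k, m)}).Walk j m) : k ∉ p.support := by
  intro hk
  exact bridge_not_reach hT h ⟨p.dropUntil k hk⟩

lemma disj_S {T : SimpleGraph N} (hT : T.IsTree) {k m m' : N} (hm : T.Adj k m)
    (hm' : T.Adj k m') (hne : m ≠ m') {j : N}
    (h1 : (T.deleteEdges {s(k, m)}).Reachable j m) :
    ¬ (T.deleteEdges {s(k, m')}).Reachable j m' := by
  intro h2
  obtain ⟨p⟩ := h1
  have hkp := not_mem_support hT.IsAcyclic hm p
  have hedges : ∀ e ∈ p.edges, e ∈ (T.deleteEdges {s(k, m')}).edgeSet := by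
    intro e he
    have heT : e ∈ T.edgeSet := by
      have := p.edges_subset_edgeSet he
      rw [SimpleGraph.edgeSet_deleteEdges] at this
      exact this.1
    rw [SimpleGraph.edgeSet_deleteEdges]
    refine ⟨heT, ?_⟩
    intro hmem
    rw [Set.mem_singleton_iff] at hmem
    exact hkp (p.fst_mem_support_of_mem_edges (hmem ▸ he))
  have q := p.transfer _ hedges
  have hadj : (T.deleteEdges {s(k, m')}).Adj m k := by
    rw [SimpleGraph.deleteEdges_adj]
    refine ⟨hm.symm, ?_⟩
    simp only [Set.mem_singleton_iff, Sym2.eq_iff]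
    rintro (⟨h1, h2⟩ | ⟨h1, h2⟩)
    · exact hm.ne h1.symm
    · exact hne h1
  have hq : (T.deleteEdges {s(k, m')}).Reachable j m := ⟨q⟩
  exact not_both hT.IsAcyclic hm' j ⟨hq.trans hadj.reachable, h2⟩

lemma coverage {T : SimpleGraph N} (hT : T.IsTree) (H : Set N)
    (hleaf1 : ∀ v ∉ H, ∃! h : N, T.Adj v h) {k j : N}
    (hj1 : j ≠ k) (hj2 : ¬ (j ∉ H ∧ T.Adj j k)) :
    ∃ m, m ∈ H ∧ T.Adj k m ∧ (T.deleteEdges {s(k, m)}).Reachable j m := by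
  obtain ⟨p0⟩ := hT.isConnected.preconnected k j
  obtain ⟨p, hp⟩ := p0.toPath
  cases p with
  | nil => exact absurd rfl hj1
  | @cons _ m0 _ h q =>
    rw [SimpleGraph.Walk.cons_isPath_iff] at hp
    have hm0H : m0 ∈ H := by
      by_contra hm0H
      obtain ⟨x, _, hxuniq⟩ := hleaf1 m0 hm0H
      cases q with
      | nil => exact hj2 ⟨hm0H, h.symm⟩
      | @cons _ c _ h2 q2 =>
        have hck : c = k := (hxuniq c h2).trans (hxuniq k h.symm).symm
        apply hp.2
        rw [SimpleGraph.Walk.support_cons]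
        exact List.mem_cons_of_mem _ (hck ▸ q2.start_mem_support)
    have hedge : ∀ e ∈ q.edges, e ∉ ({s(k, m0)} : Set (Sym2 N)) := by
      intro e he hmem
      rw [Set.mem_singleton_iff] at hmem
      subst hmem
      exact hp.2 (q.fst_mem_support_of_mem_edges he)
    have hq : (T.deleteEdges {s(k, m0)}).Reachable m0 j := ⟨q.toDeleteEdges _ hedge⟩
    exact ⟨m0, hm0H, h, hq.symm⟩

lemma alloc_not_reach {T : SimpleGraph N} (hT : T.IsTree) (H : Set N)
    (hleaf1 : ∀ v ∉ H, ∃! h : N, T.Adj v h) {k m j : N} (hm : T.Adj k m) (hmH : m ∈ H)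
    (hj : j = k ∨ (j ∉ H ∧ T.Adj j k)) :
    ¬ (T.deleteEdges {s(k, m)}).Reachable j m := by
  rcases hj with rfl | ⟨hjH, hjk⟩
  · exact bridge_not_reach hT.IsAcyclic hm
  · rintro ⟨p⟩
    cases p with
    | nil => exact hjH hmH
    | @cons _ b _ h2 q =>
      obtain ⟨x, _, hxuniq⟩ := hleaf1 j hjH
      have h2T : T.Adj j b := (T.deleteEdges_le _) h2
      have hb : b = k := (hxuniq b h2T).trans (hxuniq k hjk).symm
      subst hb
      exact bridge_not_reach hT.IsAcyclic hm ⟨q⟩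

end FlowAux

/-- Flow conservation at each hub k for the flow with origin i routed along tree paths. -/
theorem flow_conservation {N : Type*} [Fintype N] (T : SimpleGraph N) (hT : T.IsTree)
    (H : Set N) (hconn : (T.induce H).Connected)
    (hleaf1 : ∀ v ∉ H, ∃! h : N, T.Adj v h)
    (hleaf2 : ∀ v ∉ H, ∀ h : N, T.Adj v h → h ∈ H)
    (w : N → N → ℝ) (hw : ∀ a b, 0 ≤ w a b)
    (i k : N) (hk : k ∈ H) :
    (if i = k ∨ (i ∉ H ∧ T.Adj i k) then ∑ j, w i j else 0)
      + ∑ m ∈ Finset.univ.filter (fun m => m ∈ H ∧ T.Adj k m), rflow T w i m k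
    = (∑ m ∈ Finset.univ.filter (fun m => m ∈ H ∧ T.Adj k m), rflow T w i k m)
      + ∑ j ∈ Finset.univ.filter (fun j => j = k ∨ (j ∉ H ∧ T.Adj j k)), w i j := by
  classical
  set M : Finset N := Finset.univ.filter (fun m => m ∈ H ∧ T.Adj k m) with hM
  set A : Finset N := Finset.univ.filter (fun j => j = k ∨ (j ∉ H ∧ T.Adj j k)) with hA
  set S : N → Finset N :=
    fun m => Finset.univ.filter (fun j => (T.deleteEdges {s(k, m)}).Reachable j m) with hS
  have hMmem : ∀ m, m ∈ M ↔ m ∈ H ∧ T.Adj k m := by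
    intro m; simp [hM]
  have hAmem : ∀ j, j ∈ A ↔ (j = k ∨ (j ∉ H ∧ T.Adj j k)) := by
    intro j; simp [hA]
  have hSmem : ∀ m j, j ∈ S m ↔ (T.deleteEdges {s(k, m)}).Reachable j m := by
    intro m j; simp [hS]
  -- pairwise disjointness of the S m
  have hdisjS : ∀ m ∈ M, ∀ m' ∈ M, m ≠ m' → ∀ j, j ∈ S m → j ∉ S m' := by
    intro m hm m' hm' hne j hj hj'
    rw [hSmem] at hj hj'
    exact FlowAux.disj_S hT ((hMmem m).mp hm).2 ((hMmem m').mp hm').2 hne hj hj'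
  -- A is disjoint from each S m
  have hAS : ∀ m ∈ M, ∀ j ∈ A, j ∉ S m := by
    intro m hm j hj hj'
    rw [hSmem] at hj'
    exact FlowAux.alloc_not_reach hT H hleaf1 ((hMmem m).mp hm).2 ((hMmem m).mp hm).1
      ((hAmem j).mp hj) hj'
  -- coverage
  have hcover : ∀ j, j ∉ A → ∃ m ∈ M, j ∈ S m := by
    intro j hj
    rw [hAmem] at hj
    push_neg at hj
    obtain ⟨m, hmH, hadj, hr⟩ := FlowAux.coverage hT H hleaf1 hj.1 (by
      intro hcon; exact hj.2 hcon.1 hcon.2)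
    exact ⟨m, (hMmem m).mpr ⟨hmH, hadj⟩, (hSmem m j).mpr hr⟩
  -- the partition identity
  have hpd : Set.PairwiseDisjoint (M : Set N) S := by
    intro a ha b hb hab
    exact Finset.disjoint_left.mpr
      (fun j hj hj' => hdisjS a (Finset.mem_coe.mp ha) b (Finset.mem_coe.mp hb) hab j hj hj')
  have hdisjUA : Disjoint (M.biUnion S) A := by
    rw [Finset.disjoint_left]
    intro j hj hjA
    obtain ⟨m, hm, hjm⟩ := Finset.mem_biUnion.mp hj
    exact hAS m hm j hjA hjm
  have hU : M.biUnion S ∪ A = Finset.univ := by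
    apply Finset.eq_univ_of_forall
    intro j
    rw [Finset.mem_union, Finset.mem_biUnion]
    by_cases hjA : j ∈ A
    · exact Or.inr hjA
    · obtain ⟨m, hm, hjm⟩ := hcover j hjA
      exact Or.inl ⟨m, hm, hjm⟩
  have key : ∀ f : N → ℝ, (∑ m ∈ M, ∑ j ∈ S m, f j) + ∑ j ∈ A, f j = ∑ j, f j := by
    intro f
    rw [← Finset.sum_biUnion hpd, ← Finset.sum_union hdisjUA, hU]
  -- rewriting rflow
  have hrkm : ∀ m, rflow T w i k m =
      if ¬ (T.deleteEdges {s(k, m)}).Reachable i m then ∑ j ∈ S m, w i j else 0 := by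
    intro m; rfl
  have hrmk : ∀ m, rflow T w i m k =
      if ¬ (T.deleteEdges {s(k, m)}).Reachable i k then
        ∑ j ∈ Finset.univ.filter (fun j => (T.deleteEdges {s(k, m)}).Reachable j k), w i j
      else 0 := by
    intro m
    rw [rflow, Sym2.eq_swap]
  -- the k-side set is the complement of S m
  have hxor : ∀ m ∈ M, ∀ j, ((T.deleteEdges {s(k, m)}).Reachable j k ↔
      ¬ (T.deleteEdges {s(k, m)}).Reachable j m) := by
    intro m hm j
    constructor
    · intro hr hr'
      exact FlowAux.not_both hT.IsAcyclic ((hMmem m).mp hm).2 j ⟨hr, hr'⟩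
    · intro hnr
      rcases FlowAux.reach_or hT.isConnected j with h | h
      · exact h
      · exact absurd h hnr
  have hKside : ∀ m ∈ M,
      Finset.univ.filter (fun j => (T.deleteEdges {s(k, m)}).Reachable j k)
        = Finset.univ \ S m := by
    intro m hm
    ext j
    simp only [Finset.mem_filter, Finset.mem_univ, true_and, Finset.mem_sdiff, hSmem]
    exact hxor m hm j
  by_cases hiA : i = k ∨ (i ∉ H ∧ T.Adj i k)
  · -- i is allocated to k
    have hiA' : i ∈ A := (hAmem i).mpr hiA
    rw [if_pos hiA]
    have h1 : ∀ m ∈ M, rflow T w i m k = 0 := by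
      intro m hm
      rw [hrmk m]
      have : (T.deleteEdges {s(k, m)}).Reachable i k := by
        have := hKside m hm
        have hiK : i ∈ Finset.univ \ S m := Finset.mem_sdiff.mpr
          ⟨Finset.mem_univ i, hAS m hm i hiA'⟩
        rw [← this, Finset.mem_filter] at hiK
        exact hiK.2
      rw [if_neg (by simpa using this)]
    have h2 : ∀ m ∈ M, rflow T w i k m = ∑ j ∈ S m, w i j := by
      intro m hm
      rw [hrkm m]
      have : ¬ (T.deleteEdges {s(k, m)}).Reachable i m := by
        have := hAS m hm i hiA'
        rwa [hSmem] at this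
      rw [if_pos this]
    rw [Finset.sum_eq_zero h1, Finset.sum_congr rfl h2, add_zero, key (w i)]
  · -- i is not allocated to k
    rw [if_neg hiA]
    obtain ⟨m0, hm0M, him0⟩ := hcover i (fun h => hiA ((hAmem i).mp h))
    have him0' : (T.deleteEdges {s(k, m0)}).Reachable i m0 := (hSmem m0 i).mp him0
    -- left sum
    have hL : ∀ m ∈ M, rflow T w i m k =
        if m = m0 then ∑ j ∈ Finset.univ \ S m0, w i j else 0 := by
      intro m hm
      by_cases hmm : m = m0
      · subst hmm
        rw [hrmk m, if_pos rfl, hKside m hm, if_pos]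
        intro hr
        exact FlowAux.not_both hT.IsAcyclic ((hMmem m).mp hm).2 i ⟨hr, him0'⟩
      · rw [hrmk m, if_neg hmm]
        have hnot : i ∉ S m := fun hin => hdisjS m hm m0 hm0M hmm i hin him0
        rw [hSmem] at hnot
        have : (T.deleteEdges {s(k, m)}).Reachable i k := by
          rcases FlowAux.reach_or hT.isConnected i with h | h
          · exact h
          · exact absurd h hnot
        rw [if_neg (by simpa using this)]
    have hR : ∀ m ∈ M, rflow T w i k m =
        (∑ j ∈ S m, w i j) - (if m = m0 then ∑ j ∈ S m0, w i j else 0) := by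
      intro m hm
      by_cases hmm : m = m0
      · subst hmm
        rw [hrkm m, if_neg (by simpa using him0'), if_pos rfl, sub_self]
      · have hnot : i ∉ S m := fun hin => hdisjS m hm m0 hm0M hmm i hin him0
        rw [hSmem] at hnot
        rw [hrkm m, if_pos hnot, if_neg hmm, sub_zero]
    rw [Finset.sum_congr rfl hL, Finset.sum_congr rfl hR]
    rw [Finset.sum_ite_eq' M m0 (fun _ => ∑ j ∈ Finset.univ \ S m0, w i j), if_pos hm0M]
    rw [Finset.sum_sub_distrib, Finset.sum_ite_eq' M m0 (fun _ => ∑ j ∈ S m0, w i j),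
      if_pos hm0M]
    have hkey := key (w i)
    rw [Finset.sum_sdiff_eq_sub (Finset.subset_univ (S m0))]
    linarith
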